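/- t-equivalence implies τ-equivalence for down-skip-free strings: if two down-skip-free strings of equal length have the same initial state and the same transition-count matrix, then they have the same number of zeros and the same counts of zero-adjusted increments. -/

import Mathlib

/-- A string `a` of length `n` (entries `a 0, …, a (n-1)`) is down-skip-free:
consecutive decreases are at most 1. -/
def DSF (n : ℕ) (a : ℕ → ℕ) : Prop := ∀ i, i + 1 < n → a i ≤ a (i + 1) + 1

/-- Number of zeros among `a 0, …, a (n-1)`. -/
def zeros (n : ℕ) (a : ℕ → ℕ) : ℕ := ((Finset.range n).filter fun k => a k = 0).card

/-- Number of positions `j` whose zero-adjusted increment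
`a (j+1) - a j + (1 - δ_{a j, 0})` equals `r`. -/
def incCount (n : ℕ) (a : ℕ → ℕ) (r : ℕ) : ℕ :=
  ((Finset.range (n - 1)).filter fun j =>
    a (j + 1) + (if a j = 0 then 0 else 1) = a j + r).card

/-- The statistic τ: same initial state, same number of zeros, same counts of
zero-adjusted increments. -/
def TauEquiv (n : ℕ) (a b : ℕ → ℕ) : Prop :=
  a 0 = b 0 ∧ zeros n a = zeros n b ∧ ∀ r, incCount n a r = incCount n b r

/-- Transition counts of the string `x 0, …, x (n-1)`. -/
def transCount {S : Type*} [DecidableEq S] (n : ℕ) (x : ℕ → S) (r s : S) : ℕ :=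
  ((Finset.range (n - 1)).filter fun j => x j = r ∧ x (j + 1) = s).card

/-- Any count of positions `j` determined by the pair `(a j, a (j+1))`
decomposes as a sum of transition counts. -/
lemma pair_decomp (n : ℕ) (a : ℕ → ℕ) (P : ℕ → ℕ → Prop) [∀ p q, Decidable (P p q)]
    (M : ℕ) (hM : ∀ j, j < n → a j < M) :
    ((Finset.range (n - 1)).filter fun j => P (a j) (a (j + 1))).card
      = ∑ pq ∈ Finset.range M ×ˢ Finset.range M,
          if P pq.1 pq.2 then transCount n a pq.1 pq.2 else 0 := by
  rw [Finset.card_eq_sum_card_fiberwise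
    (f := fun j => (a j, a (j + 1))) (t := Finset.range M ×ˢ Finset.range M)
    (fun j hj => by
      simp only [Finset.mem_coe, Finset.mem_filter, Finset.mem_range] at hj
      simp only [Finset.mem_coe, Finset.mem_product, Finset.mem_range]
      exact ⟨hM j (by omega), hM (j + 1) (by omega)⟩)]
  refine Finset.sum_congr rfl fun pq _ => ?_
  by_cases hP : P pq.1 pq.2
  · rw [if_pos hP, transCount]
    congr 1
    rw [Finset.filter_filter]
    refine Finset.filter_congr fun j _ => ?_
    constructor
    · rintro ⟨_, h⟩
      exact ⟨congrArg Prod.fst h, congrArg Prod.snd h⟩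
    · rintro ⟨h1, h2⟩
      exact ⟨h1 ▸ h2 ▸ hP, by rw [h1, h2]⟩
  · rw [if_neg hP, Finset.card_eq_zero, Finset.filter_filter, Finset.filter_eq_empty_iff]
    rintro j _ ⟨hPj, hj⟩
    exact hP (hj ▸ hPj)

lemma zeros_split (n : ℕ) (hn : 0 < n) (a : ℕ → ℕ) :
    zeros n a = (if a 0 = 0 then 1 else 0)
      + ((Finset.range (n - 1)).filter fun j => a (j + 1) = 0).card := by
  have hr : Finset.range n = insert 0 ((Finset.range (n - 1)).image (· + 1)) := by
    ext k
    simp only [Finset.mem_range, Finset.mem_insert, Finset.mem_image]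
    constructor
    · intro hk
      rcases Nat.eq_zero_or_pos k with h | h
      · exact Or.inl h
      · exact Or.inr ⟨k - 1, by omega, by omega⟩
    · rintro (rfl | ⟨j, hj, rfl⟩) <;> omega
  rw [zeros, hr, Finset.filter_insert]
  have h0mem : (0 : ℕ) ∉ (Finset.range (n - 1)).image (· + 1) := by
    simp
  have himg : (((Finset.range (n - 1)).image (· + 1)).filter fun k => a k = 0).card
      = ((Finset.range (n - 1)).filter fun j => a (j + 1) = 0).card := by
    rw [Finset.filter_image, Finset.card_image_of_injective _ (add_left_injective 1)]
  by_cases h : a 0 = 0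
  · rw [if_pos h, if_pos h, Finset.card_insert_of_notMem (fun hm => h0mem (Finset.mem_filter.mp hm).1),
      himg, add_comm]
  · rw [if_neg h, if_neg h, himg, zero_add]

theorem stmt6 (n : ℕ) (hn : 0 < n) (a b : ℕ → ℕ)
    (ha : DSF n a) (hb : DSF n b) (h0 : a 0 = b 0)
    (hT : ∀ r s, transCount n a r s = transCount n b r s) :
    TauEquiv n a b := by
  set M : ℕ := ((Finset.range n).sup a) + ((Finset.range n).sup b) + 1 with hM
  have hMa : ∀ j, j < n → a j < M := fun j hj =>
    lt_of_le_of_lt (Finset.le_sup (f := a) (Finset.mem_range.mpr hj)) (by omega)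
  have hMb : ∀ j, j < n → b j < M := fun j hj =>
    lt_of_le_of_lt (Finset.le_sup (f := b) (Finset.mem_range.mpr hj)) (by omega)
  refine ⟨h0, ?_, ?_⟩
  · rw [zeros_split n hn a, zeros_split n hn b, h0,
      pair_decomp n a (fun _ q => q = 0) M hMa,
      pair_decomp n b (fun _ q => q = 0) M hMb]
    congr 1
    exact Finset.sum_congr rfl fun pq _ => by rw [hT]
  · intro r
    rw [incCount, incCount,
      pair_decomp n a (fun p q => q + (if p = 0 then 0 else 1) = p + r) M hMa,
      pair_decomp n b (fun p q => q + (if p = 0 then 0 else 1) = p + r) M hMb]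
    exact Finset.sum_congr rfl fun pq _ => by rw [hT]
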